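/- arXiv:1904.03881 — 3 statements merged into one kernel-verified Lean document; each statement's English description precedes it below -/
import Mathlib

section
/- With P_n and A_d as defined (P_0 = 1, P_1 = 1 + x, P_{n+2} = P_{n+1} + x·P_n; A_d(x^k) = x·A_{d-1}(x^{k-1}) for k>0, A_0(1) = 1+2x, A_d(1) = P_{2d+1} − A_d(P_{2d-1} − 1)), we have A_d(P_{2d}) = P_{2d+2} for all d ≥ 1. -/
open Polynomial

noncomputable def P : ℕ → Polynomial ℤ
  | 0 => 1
  | 1 => 1 + Polynomial.X
  | n + 2 => P (n + 1) + Polynomial.X * P n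

/-- `Amon d k` is the value of the linear map `A_d` on the monomial `x^k`. -/
noncomputable def Amon : ℕ → ℕ → Polynomial ℤ
  | 0, 0 => 1 + 2 * Polynomial.X
  | 0, _ + 1 => 0
  | d + 1, k + 1 => Polynomial.X * Amon d k
  | d + 1, 0 =>
      P (2 * d + 3) -
        ∑ k ∈ Finset.range (d + 1),
          Polynomial.C ((P (2 * d + 1)).coeff (k + 1)) * (Polynomial.X * Amon d k)

/-- The linear map `A_d` applied to a polynomial of degree at most `d`. -/
noncomputable def Aap (d : ℕ) (p : Polynomial ℤ) : Polynomial ℤ :=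
  ∑ k ∈ Finset.range (d + 1), Polynomial.C (p.coeff k) * Amon d k

lemma P_coeff_zero : ∀ n, (P n).coeff 0 = 1
  | 0 => by simp [P]
  | 1 => by simp [P]
  | n + 2 => by simp [P, P_coeff_zero (n + 1)]

lemma P_rec (n : ℕ) : P (n + 2) = P (n + 1) + X * P n := by simp [P]

lemma Aap_step (e : ℕ) :
    Aap (e+1) (P (2*e+2)) = P (2*e+3) + X * Aap e (P (2*e)) := by
  unfold Aap
  rw [Finset.sum_range_succ']
  have h0 : (P (2*e+2)).coeff 0 = 1 := P_coeff_zero _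
  have hA0 : Amon (e+1) 0 = P (2*e+3) -
      ∑ k ∈ Finset.range (e+1), C ((P (2*e+1)).coeff (k+1)) * (X * Amon e k) := by
    simp [Amon]
  have hcoeff : ∀ k, (P (2*e+2)).coeff (k+1) =
      (P (2*e+1)).coeff (k+1) + (P (2*e)).coeff k := by
    intro k
    rw [show (2*e+2) = (2*e)+2 from rfl, P_rec, coeff_add, coeff_X_mul]
  have hmon : ∀ k, Amon (e+1) (k+1) = X * Amon e k := by
    intro k; simp [Amon]
  simp only [hcoeff, hmon, h0, hA0, map_add, add_mul, map_one, one_mul]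
  rw [Finset.sum_add_distrib]
  have : ∑ k ∈ Finset.range (e+1), C ((P (2*e)).coeff k) * (X * Amon e k)
      = X * ∑ k ∈ Finset.range (e+1), C ((P (2*e)).coeff k) * Amon e k := by
    rw [Finset.mul_sum]; exact Finset.sum_congr rfl fun k _ => by ring
  rw [this]; ring

lemma Aap_P : ∀ e, Aap e (P (2*e)) = P (2*e+2)
  | 0 => by
    simp [Aap, Amon, P]
    ring
  | e + 1 => by
    rw [show 2*(e+1) = 2*e+2 from by ring, Aap_step, Aap_P e,
      P_rec (2*e+2), show 2*e+2+1 = 2*e+3 from by ring]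

theorem A_P_even (d : ℕ) (hd : 1 ≤ d) :
    Aap d (P (2 * d)) = P (2 * d + 2) := Aap_P d
end

section
/- With A_d as defined, for all d ≥ k ≥ 1: A_d(x^k) = x^k · A_{d-k}(1), and hence A_d(x^k) = x^k·(1 + 2x − x² + 2x³ − ⋯ + (−1)^{d−k}·Cat(d−k)·x^{d−k+1}). -/
open Polynomial

lemma pascalAux (a j : ℕ) (hj : 1 ≤ j) :
    (a + 2 - j).choose j = (a + 1 - j).choose j + (a + 1 - j).choose (j - 1) := by
  obtain ⟨i, rfl⟩ : ∃ i, j = i + 1 := ⟨j - 1, by omega⟩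
  rcases le_or_gt (i + 1) (a + 1) with h | h
  · have h1 : a + 2 - (i + 1) = (a + 1 - (i + 1)) + 1 := by omega
    rw [h1, Nat.choose_succ_succ']
    simp [Nat.add_comm]
  · rw [show a + 2 - (i+1) = 0 by omega, show a + 1 - (i+1) = 0 by omega,
      Nat.choose_eq_zero_of_lt (by omega : 0 < i + 1)]
    rw [show i + 1 - 1 = i by omega, Nat.choose_eq_zero_of_lt (by omega : (0:ℕ) < i)]

lemma catalan_central (n : ℕ) : (n+1) * catalan n = (2*n).choose n := by
  rw [catalan_eq_centralBinom_div, Nat.mul_div_cancel' (Nat.succ_dvd_centralBinom n),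
    Nat.centralBinom]

lemma catalan_choose (n : ℕ) :
    (((2*n).choose n : ℤ)) - ((2*n).choose (n+1) : ℤ) = (catalan n : ℤ) := by
  have h1' : ((n:ℤ)+1) * (catalan n : ℤ) = ((2*n).choose n : ℤ) := by
    exact_mod_cast catalan_central n
  have h2' : ((2*n).choose (n+1) : ℤ) * ((n:ℤ)+1) = ((2*n).choose n : ℤ) * n := by
    have := Nat.choose_succ_right_eq (2*n) n
    rw [show 2*n - n = n by omega] at this
    exact_mod_cast this
  have hne : ((n:ℤ)+1) ≠ 0 := by positivity
  apply mul_left_cancel₀ hne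
  linear_combination (-1 : ℤ) * h1' - h2'

lemma catalan_choose' (k : ℕ) :
    (((2*k+1).choose (k+1) : ℤ)) - ((2*k+1).choose (k+2) : ℤ) = (catalan (k+1) : ℤ) := by
  have hs : (2*k+1).choose k = (2*k+1).choose (k+1) := by
    rw [← Nat.choose_symm (by omega : k ≤ 2*k+1), show 2*k+1-k = k+1 by omega]
  have p1 : (2*k+2).choose (k+1) = (2*k+1).choose k + (2*k+1).choose (k+1) :=
    Nat.choose_succ_succ' (2*k+1) k
  have p2 : (2*k+2).choose (k+2) = (2*k+1).choose (k+1) + (2*k+1).choose (k+2) :=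
    Nat.choose_succ_succ' (2*k+1) (k+1)
  have h := catalan_choose (k+1)
  rw [show 2*(k+1) = 2*k+2 by ring] at h
  rw [p1, p2, hs] at h
  push_cast at h ⊢
  linarith

lemma dIdentity : ∀ m n : ℕ, m ≤ 2*n →
    ∑ j ∈ Finset.range (n+1), (-1:ℤ)^j * ((m - j).choose j : ℤ) * (catalan (n - j) : ℤ)
      = ((2*n - m).choose n : ℤ) - ((2*n - m).choose (n+1) : ℤ) := by
  intro m
  induction m using Nat.strong_induction_on with
  | _ m ih =>
    match m with
    | 0 =>
      intro n _
      rw [Finset.sum_eq_single 0]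
      · simp [Nat.sub_zero, catalan_choose n]
      · intro j _ hj
        rw [show (0:ℕ) - j = 0 by omega, Nat.choose_eq_zero_of_lt (by omega)]
        ring
      · intro h; simp at h
    | 1 =>
      intro n hn
      obtain ⟨k, rfl⟩ : ∃ k, n = k + 1 := ⟨n - 1, by omega⟩
      rw [Finset.sum_eq_single 0]
      · simpa [show 2*(k+1) - 1 = 2*k+1 by omega] using (catalan_choose' k).symm
      · intro j _ hj
        rw [show (1:ℕ) - j = 0 by omega, Nat.choose_eq_zero_of_lt (by omega)]
        ring
      · intro h; simp at h
    | (m+2) =>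
      intro n hn
      obtain ⟨k, rfl⟩ : ∃ k, n = k + 1 := ⟨n - 1, by omega⟩
      have IH1 := ih (m+1) (by omega) (k+1) (by omega)
      have IH2 := ih m (by omega) k (by omega)
      rw [Finset.sum_range_succ'] at IH1 ⊢
      have split : ∀ i ∈ Finset.range (k+1),
          (-1:ℤ)^(i+1) * ((m + 2 - (i+1)).choose (i+1) : ℤ) * (catalan (k+1 - (i+1)) : ℤ)
          = (-1:ℤ)^(i+1) * ((m + 1 - (i+1)).choose (i+1) : ℤ) * (catalan (k - i) : ℤ)
            - (-1:ℤ)^i * ((m - i).choose i : ℤ) * (catalan (k - i) : ℤ) := by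
        intro i _
        rw [pascalAux m (i+1) (by omega)]
        rw [show m + 1 - (i+1) = m - i by omega, show i + 1 - 1 = i by omega,
          show k + 1 - (i+1) = k - i by omega]
        push_cast
        ring
      rw [Finset.sum_congr rfl split, Finset.sum_sub_distrib]
      have e1 : ∀ i ∈ Finset.range (k+1),
          (-1:ℤ)^(i+1) * ((m + 1 - (i+1)).choose (i+1) : ℤ) * (catalan (k - i) : ℤ)
          = (-1:ℤ)^(i+1) * ((m + 1 - (i+1)).choose (i+1) : ℤ) * (catalan (k+1 - (i+1)) : ℤ) := by
        intro i _; rw [show k + 1 - (i+1) = k - i by omega]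
      rw [Finset.sum_congr rfl e1]
      rw [show ((-1:ℤ)^0 * ((m + 2 - 0).choose 0 : ℤ) * (catalan (k+1-0) : ℤ))
          = ((-1:ℤ)^0 * ((m + 1 - 0).choose 0 : ℤ) * (catalan (k+1-0) : ℤ)) by norm_num]
      rw [IH2]
      have q1 : ((2*(k+1) - (m+1)).choose (k+1) : ℤ)
          = ((2*k - m).choose k : ℤ) + ((2*k - m).choose (k+1) : ℤ) := by
        rw [show 2*(k+1) - (m+1) = (2*k - m) + 1 by omega]
        exact_mod_cast congrArg (Nat.cast : ℕ → ℤ) (Nat.choose_succ_succ' (2*k - m) k)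
      have q2 : ((2*(k+1) - (m+1)).choose (k+1+1) : ℤ)
          = ((2*k - m).choose (k+1) : ℤ) + ((2*k - m).choose (k+2) : ℤ) := by
        rw [show 2*(k+1) - (m+1) = (2*k - m) + 1 by omega]
        exact_mod_cast congrArg (Nat.cast : ℕ → ℤ) (Nat.choose_succ_succ' (2*k - m) (k+1))
      rw [show 2*(k+1) - (m+2) = 2*k - m by omega]
      rw [show k+1+1 = k+2 by rfl] at IH1 q2
      linarith [IH1, q1, q2]

lemma Pcoeff : ∀ m j : ℕ, (P m).coeff j = ((m + 1 - j).choose j : ℤ) := by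
  intro m
  induction m using Nat.strong_induction_on with
  | _ m ih =>
    match m with
    | 0 =>
      intro j
      rcases j with _ | j
      · simp [P]
      · rcases j with _ | j
        · simp [P, coeff_one]
        · simp [P, coeff_one, Nat.choose_eq_zero_of_lt, show 0 + 1 - (j+2) = 0 by omega,
            Nat.choose_eq_zero_of_lt (show 0 < j + 2 by omega)]
    | 1 =>
      intro j
      rcases j with _ | j
      · simp [P]
      · rcases j with _ | j
        · simp [P, coeff_one, coeff_X]
        · simp [P, coeff_one, coeff_X, show 1 + 1 - (j+2) = 0 by omega,
            Nat.choose_eq_zero_of_lt (show 0 < j + 2 by omega)]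
    | (m+2) =>
      intro j
      have h1 := ih (m+1) (by omega)
      have h0 := ih m (by omega)
      show (P (m+1) + Polynomial.X * P m).coeff j = _
      rcases j with _ | i
      · simp [h1 0, Polynomial.mul_coeff_zero]
      · rw [coeff_add, coeff_X_mul, h1 (i+1), h0 i]
        rw [show m + 2 + 1 - (i+1) = (m+1) + 2 - (i+1) by omega,
          pascalAux (m+1) (i+1) (by omega),
          show m + 1 + 1 - (i+1) = m + 1 - i by omega, show i + 1 - 1 = i by omega]
        push_cast
        ring

noncomputable def bpoly (n : ℕ) : Polynomial ℤ :=
  1 + Polynomial.X + ∑ m ∈ Finset.range (n+1),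
    Polynomial.C ((-1)^m * (catalan m : ℤ)) * Polynomial.X^(m+1)

lemma bpoly_zero : bpoly 0 = 1 + 2 * Polynomial.X := by
  simp [bpoly]
  ring

lemma bpoly_succ (n : ℕ) : bpoly (n+1)
    = bpoly n + Polynomial.C ((-1)^(n+1) * (catalan (n+1) : ℤ)) * Polynomial.X^(n+2) := by
  simp [bpoly, Finset.sum_range_succ]
  ring

lemma neg_one_pow_sub {N j : ℕ} (h : j ≤ N) : (-1:ℤ)^(N-j) = (-1)^N * (-1)^j := by
  have : (-1:ℤ)^(N-j) * ((-1)^j * (-1)^j) = (-1)^N * (-1)^j := by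
    rw [← mul_assoc, ← pow_add, show N - j + j = N by omega]
  simpa [← pow_add, ← two_mul, pow_mul] using this

lemma keyG : ∀ m : ℕ, P (m+2) = ∑ j ∈ Finset.range ((m+1)/2 + 1),
    Polynomial.C ((P m).coeff j) * Polynomial.X^j * bpoly ((m+1)/2 - j) := by
  intro m
  induction m using Nat.strong_induction_on with
  | _ m ih =>
    match m with
    | 0 =>
      rw [show (0+1)/2 + 1 = 1 by rfl, Finset.sum_range_one, bpoly_zero]
      show P 1 + Polynomial.X * P 0 = _
      simp [P, coeff_one]
      ring
    | 1 =>
      rw [show (1+1)/2 + 1 = 2 by rfl, Finset.sum_range_succ, Finset.sum_range_one]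
      show P 2 + Polynomial.X * P 1 = _
      rw [show P 2 = P 1 + Polynomial.X * P 0 from rfl]
      rw [show bpoly 1 = bpoly 0 + Polynomial.C ((-1)^(0+1) * (catalan (0+1) : ℤ))
        * Polynomial.X^(0+2) from bpoly_succ 0, bpoly_zero]
      simp [P, coeff_one, coeff_X, catalan_one]
      ring
    | (m+2) =>
      rcases Nat.even_or_odd m with ⟨d, hd⟩ | ⟨d, hd⟩
      · -- m = 2d, target index m+2 = 2d+2 (even target)
        subst hd
        have IHodd := ih (d + d + 1) (by omega)
        have IHeven := ih (d + d) (by omega)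
        rw [show (d + d + 1 + 1)/2 = d + 1 by omega] at IHodd
        rw [show (d + d + 1)/2 = d by omega] at IHeven
        rw [show (d + d + 2 + 1)/2 = d + 1 by omega]
        have hsplit : ∀ j ∈ Finset.range (d+2),
            Polynomial.C ((P (d + d + 2)).coeff j) * Polynomial.X^j * bpoly (d+1-j)
            = Polynomial.C ((P (d + d + 1)).coeff j) * Polynomial.X^j * bpoly (d+1-j)
              + Polynomial.C ((Polynomial.X * P (d + d)).coeff j) * Polynomial.X^j
                * bpoly (d+1-j) := by
          intro j _
          rw [show P (d + d + 2) = P (d + d + 1) + Polynomial.X * P (d + d) from rfl,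
            coeff_add, map_add]
          ring
        rw [Finset.sum_congr rfl hsplit, Finset.sum_add_distrib, ← IHodd]
        rw [Finset.sum_range_succ']
        have hzero : Polynomial.C ((Polynomial.X * P (d + d)).coeff 0) * Polynomial.X^0
            * bpoly (d+1-0) = 0 := by
          simp [Polynomial.mul_coeff_zero]
        rw [hzero, add_zero]
        have hre : ∀ i ∈ Finset.range (d+1),
            Polynomial.C ((Polynomial.X * P (d + d)).coeff (i+1)) * Polynomial.X^(i+1)
              * bpoly (d+1-(i+1))
            = Polynomial.X * (Polynomial.C ((P (d + d)).coeff i) * Polynomial.X^i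
              * bpoly (d-i)) := by
          intro i _
          rw [coeff_X_mul, show d+1-(i+1) = d-i by omega, pow_succ]
          ring
        rw [Finset.sum_congr rfl hre, ← Finset.mul_sum, ← IHeven]
        show _ = P (d + d + 2 + 1) + Polynomial.X * P (d + d + 2)
        rw [show P (d + d + 2 + 2) = P (d + d + 2 + 1) + Polynomial.X * P (d + d + 2) from rfl]
      · -- m = 2d+1, target index m+2 = 2d+3 (odd target)
        subst hd
        have IH1 := ih (2*d + 2) (by omega)
        have IH2 := ih (2*d + 1) (by omega)
        rw [show (2*d + 2 + 1)/2 = d + 1 by omega] at IH1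
        rw [show (2*d + 1 + 1)/2 = d + 1 by omega] at IH2
        rw [show (2*d + 1 + 2 + 1)/2 = d + 2 by omega]
        rw [show 2*d + 1 + 2 = 2*d + 3 by ring]
        have hsplit : ∀ j ∈ Finset.range (d+3),
            Polynomial.C ((P (2*d + 3)).coeff j) * Polynomial.X^j * bpoly (d+2-j)
            = Polynomial.C ((P (2*d + 2)).coeff j) * Polynomial.X^j * bpoly (d+2-j)
              + Polynomial.C ((Polynomial.X * P (2*d + 1)).coeff j) * Polynomial.X^j
                * bpoly (d+2-j) := by
          intro j _
          rw [show P (2*d + 3) = P (2*d + 2) + Polynomial.X * P (2*d + 1) from rfl,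
            coeff_add, map_add]
          ring
        rw [Finset.sum_congr rfl hsplit, Finset.sum_add_distrib]
        -- S2: the X * P(2d+1) part
        have hS2 : ∑ j ∈ Finset.range (d+3),
            Polynomial.C ((Polynomial.X * P (2*d + 1)).coeff j) * Polynomial.X^j
              * bpoly (d+2-j) = Polynomial.X * P (2*d + 3) := by
          rw [Finset.sum_range_succ']
          have hzero : Polynomial.C ((Polynomial.X * P (2*d + 1)).coeff 0) * Polynomial.X^0
              * bpoly (d+2-0) = 0 := by
            simp [Polynomial.mul_coeff_zero]
          rw [hzero, add_zero]
          have hre : ∀ i ∈ Finset.range (d+2),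
              Polynomial.C ((Polynomial.X * P (2*d + 1)).coeff (i+1)) * Polynomial.X^(i+1)
                * bpoly (d+2-(i+1))
              = Polynomial.X * (Polynomial.C ((P (2*d + 1)).coeff i) * Polynomial.X^i
                * bpoly (d+1-i)) := by
            intro i _
            rw [coeff_X_mul, show d+2-(i+1) = d+1-i by omega, pow_succ]
            ring
          rw [Finset.sum_congr rfl hre, ← Finset.mul_sum, ← IH2]
        rw [hS2]
        -- S1: the P(2d+2) part
        have hS1 : ∑ j ∈ Finset.range (d+3),
            Polynomial.C ((P (2*d + 2)).coeff j) * Polynomial.X^j * bpoly (d+2-j)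
            = P (2*d + 4) := by
          rw [Finset.sum_range_succ]
          have hlast : Polynomial.C ((P (2*d + 2)).coeff (d+2)) * Polynomial.X^(d+2)
              * bpoly (d+2-(d+2)) = 0 := by
            rw [Pcoeff, show 2*d + 2 + 1 - (d+2) = d+1 by omega,
              Nat.choose_eq_zero_of_lt (by omega)]
            simp
          rw [hlast, add_zero]
          have hsplit2 : ∀ j ∈ Finset.range (d+2),
              Polynomial.C ((P (2*d + 2)).coeff j) * Polynomial.X^j * bpoly (d+2-j)
              = Polynomial.C ((P (2*d + 2)).coeff j) * Polynomial.X^j * bpoly (d+1-j)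
                + Polynomial.C ((P (2*d + 2)).coeff j * ((-1)^(d+2-j) * (catalan (d+2-j) : ℤ)))
                  * Polynomial.X^(d+3) := by
            intro j hj
            simp only [Finset.mem_range] at hj
            rw [show d+2-j = (d+1-j)+1 by omega, bpoly_succ (d+1-j)]
            rw [show d+1-j+1 = d+2-j by omega, show d+1-j+2 = d+3-j by omega]
            have hx : Polynomial.X^j * Polynomial.X^(d+3-j) = (Polynomial.X : Polynomial ℤ)^(d+3) := by
              rw [← pow_add, show j + (d+3-j) = d+3 by omega]
            calc Polynomial.C ((P (2*d + 2)).coeff j) * Polynomial.X^j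
                  * (bpoly (d+1-j) + Polynomial.C ((-1)^(d+2-j) * (catalan (d+2-j) : ℤ))
                    * Polynomial.X^(d+3-j))
                = Polynomial.C ((P (2*d + 2)).coeff j) * Polynomial.X^j * bpoly (d+1-j)
                  + Polynomial.C ((P (2*d + 2)).coeff j)
                    * Polynomial.C ((-1)^(d+2-j) * (catalan (d+2-j) : ℤ))
                    * (Polynomial.X^j * Polynomial.X^(d+3-j)) := by ring
            _ = _ := by rw [hx]; simp only [map_mul]
          rw [Finset.sum_congr rfl hsplit2, Finset.sum_add_distrib, ← IH1]
          have hcorr : ∑ j ∈ Finset.range (d+2),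
              Polynomial.C ((P (2*d + 2)).coeff j * ((-1)^(d+2-j) * (catalan (d+2-j) : ℤ)))
                * Polynomial.X^(d+3) = 0 := by
            rw [← Finset.sum_mul, ← map_sum]
            have htot : ∑ j ∈ Finset.range (d+2),
                (P (2*d + 2)).coeff j * ((-1)^(d+2-j) * (catalan (d+2-j) : ℤ)) = 0 := by
              have hd2 := dIdentity (2*d+3) (d+2) (by omega)
              rw [Finset.sum_range_succ] at hd2
              rw [show 2*d+3 - (d+2) = d+1 by omega,
                Nat.choose_eq_zero_of_lt (show d+1 < d+2 by omega)] at hd2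
              rw [show 2*(d+2) - (2*d+3) = 1 by omega,
                Nat.choose_eq_zero_of_lt (show 1 < d+2 by omega),
                Nat.choose_eq_zero_of_lt (show 1 < d+2+1 by omega)] at hd2
              simp only [Nat.cast_zero, mul_zero, zero_mul, add_zero, sub_zero] at hd2
              have hterm : ∀ j ∈ Finset.range (d+2),
                  (P (2*d + 2)).coeff j * ((-1)^(d+2-j) * (catalan (d+2-j) : ℤ))
                  = (-1)^(d+2) * ((-1:ℤ)^j * ((2*d+3 - j).choose j : ℤ)
                    * (catalan (d+2-j) : ℤ)) := by
                intro j hj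
                simp only [Finset.mem_range] at hj
                rw [Pcoeff, show 2*d+2+1-j = 2*d+3-j by omega,
                  neg_one_pow_sub (show j ≤ d+2 by omega)]
                ring
              rw [Finset.sum_congr rfl hterm, ← Finset.mul_sum, hd2, mul_zero]
            rw [htot]
            simp
          rw [hcorr, add_zero]
        rw [hS1]
        rw [show P (2*d + 3 + 2) = P (2*d + 3 + 1) + Polynomial.X * P (2*d + 3) from rfl]

lemma Amon_shift : ∀ k d : ℕ, k ≤ d → Amon d k = Polynomial.X^k * Amon (d - k) 0 := by
  intro k
  induction k with
  | zero => intro d _; simp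
  | succ k ihk =>
    intro d hd
    obtain ⟨e, rfl⟩ : ∃ e, d = e + 1 := ⟨d - 1, by omega⟩
    rw [show Amon (e+1) (k+1) = Polynomial.X * Amon e k from rfl,
      ihk e (by omega), show e + 1 - (k+1) = e - k by omega, pow_succ]
    ring

lemma Amon_zero : ∀ n : ℕ, Amon n 0 = bpoly n := by
  intro n
  induction n using Nat.strong_induction_on with
  | _ n ih =>
    match n with
    | 0 => rw [bpoly_zero]; rfl
    | (d+1) =>
      have hG := keyG (2*d+1)
      rw [show (2*d+1+1)/2 = d + 1 by omega] at hG
      rw [Finset.sum_range_succ'] at hG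
      rw [show Amon (d+1) 0 = P (2 * d + 3) -
        ∑ k ∈ Finset.range (d + 1),
          Polynomial.C ((P (2 * d + 1)).coeff (k + 1)) * (Polynomial.X * Amon d k) from rfl]
      have hsum : ∀ k ∈ Finset.range (d+1),
          Polynomial.C ((P (2 * d + 1)).coeff (k + 1)) * (Polynomial.X * Amon d k)
          = Polynomial.C ((P (2 * d + 1)).coeff (k + 1)) * Polynomial.X^(k+1)
            * bpoly (d + 1 - (k+1)) := by
        intro k hk
        simp only [Finset.mem_range] at hk
        rw [Amon_shift k d (by omega), ih (d - k) (by omega),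
          show d + 1 - (k+1) = d - k by omega, pow_succ]
        ring
      rw [Finset.sum_congr rfl hsum]
      have h3 : P (2*d+3) = P (2*d+1+2) := by ring_nf
      rw [h3, hG]
      have hc0 : (P (2*d+1)).coeff 0 = 1 := by rw [Pcoeff]; simp
      rw [hc0]
      simp

theorem A_monomial (d k : ℕ) (hk : 1 ≤ k) (hkd : k ≤ d) :
    Amon d k = Polynomial.X ^ k * Amon (d - k) 0 ∧
    Amon d k = Polynomial.X ^ k *
      (1 + Polynomial.X + ∑ m ∈ Finset.range (d - k + 1),
        Polynomial.C ((-1) ^ m * (catalan m : ℤ)) * Polynomial.X ^ (m + 1)) := by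
  refine ⟨Amon_shift k d hkd, ?_⟩
  rw [Amon_shift k d hkd, Amon_zero (d - k)]
  rfl
end

section
/- Define the doubly-indexed polynomials P_{n,i} for 1 ≤ i ≤ n by P_{n,1}-type boundary values P_{2d-1,1} = P_{2d-1} + x·P_{2d-3} and P_{2d-1,2} = P_{2d-1} + x·P_{2d-4}, together with recurrences P_{n+2,i} = P_{n+1,i} + x·P_{n,i} and P_{n+2,i} = P_{n+1,i-1} + x·P_{n,i-2}. Then for all d ≥ 2: P_{2d+1,d} − P_{2d+1,d-1} = (−1)^{d+1}·(x^{d+1} + x^d). -/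
open Polynomial

theorem top_difference (Q : ℕ → ℕ → Polynomial ℤ)
    (h1 : ∀ n i : ℕ, Q (n + 2) i = Q (n + 1) i + Polynomial.X * Q n i)
    (h2 : ∀ n i : ℕ, 3 ≤ i → Q (n + 2) i = Q (n + 1) (i - 1) + Polynomial.X * Q n (i - 2))
    (h3 : ∀ d : ℕ, 2 ≤ d → Q (2 * d - 1) 1 = P (2 * d - 1) + Polynomial.X * P (2 * d - 3))
    (h4 : ∀ d : ℕ, 2 ≤ d → Q (2 * d - 1) 2 = P (2 * d - 1) + Polynomial.X * P (2 * d - 4)) :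
    ∀ d : ℕ, 2 ≤ d →
      Q (2 * d + 1) d - Q (2 * d + 1) (d - 1) =
        (-1 : Polynomial ℤ) ^ (d + 1) * (Polynomial.X ^ (d + 1) + Polynomial.X ^ d) := by
  intro d hd
  induction d, hd using Nat.le_induction with
  | base =>
    have e1 := h3 3 (by norm_num)
    have e2 := h4 3 (by norm_num)
    norm_num at e1 e2
    show Q 5 2 - Q 5 1 = _
    rw [e1, e2]
    simp [P]
    ring
  | succ d hd ih =>
    have ha := h2 (2 * d + 1) (d + 1) (by omega)
    have hb := h1 (2 * d + 1) d
    have key : 2 * (d + 1) + 1 = 2 * d + 1 + 2 := by ring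
    show Q (2 * (d + 1) + 1) (d + 1) - Q (2 * (d + 1) + 1) d = _
    rw [key]
    have hd1 : d + 1 - 1 = d := rfl
    have hd2 : d + 1 - 2 = d - 1 := rfl
    rw [hd1, hd2] at ha
    rw [ha, hb]
    linear_combination (-Polynomial.X) * ih
end
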